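/- On the unit sphere (two-dimensional sphere of radius 1), consider a spherical triangle with vertices p̄, q̄, s̄ whose angles at q̄ and at s̄ are each at least π/2 and whose perimeter is less than π. Then q̄ = s̄; i.e., a nondegenerate spherical triangle of perimeter less than π cannot have two angles both ≥ π/2. -/

import Mathlib

open Real

/-- Spherical geodesic distance between unit vectors. -/
noncomputable def sphericalDist {n : ℕ} (x y : EuclideanSpace ℝ (Fin n)) : ℝ :=
  Real.arccos (inner ℝ x y : ℝ)

/-- On the unit two-dimensional sphere, a spherical triangle with perimeter
less than `π` cannot have two angles both `≥ π/2` unless the corresponding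
vertices coincide. The angles `A` at `q̄` and `B` at `s̄` are encoded via the
spherical law of cosines. -/
theorem spherical_triangle_two_right_angles
    (p q s : EuclideanSpace ℝ (Fin 3))
    (hp : ‖p‖ = 1) (hq : ‖q‖ = 1) (hs : ‖s‖ = 1)
    (A B : ℝ) (hA : A ∈ Set.Icc (π / 2) π) (hB : B ∈ Set.Icc (π / 2) π)
    (hcosA : Real.cos (sphericalDist p s) =
      Real.cos (sphericalDist p q) * Real.cos (sphericalDist q s) +
        Real.sin (sphericalDist p q) * Real.sin (sphericalDist q s) * Real.cos A)
    (hcosB : Real.cos (sphericalDist p q) =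
      Real.cos (sphericalDist p s) * Real.cos (sphericalDist s q) +
        Real.sin (sphericalDist p s) * Real.sin (sphericalDist s q) * Real.cos B)
    (hperim : sphericalDist p q + sphericalDist q s + sphericalDist s p < π) :
    q = s := by
  set a := sphericalDist p q with ha
  set b := sphericalDist q s with hb
  set c := sphericalDist p s with hc
  have hsq : sphericalDist s q = b := by
    simp only [sphericalDist, ha, hb, real_inner_comm]
  have hsp : sphericalDist s p = c := by
    simp only [sphericalDist, hc, real_inner_comm]
  rw [hsq] at hcosB
  rw [hsp] at hperim
  -- basic bounds
  have ha0 : 0 ≤ a := Real.arccos_nonneg _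
  have hb0 : 0 ≤ b := Real.arccos_nonneg _
  have hc0 : 0 ≤ c := Real.arccos_nonneg _
  have haπ : a ≤ π := Real.arccos_le_pi _
  have hbπ : b ≤ π := Real.arccos_le_pi _
  have hcπ : c ≤ π := Real.arccos_le_pi _
  have hsa : 0 ≤ Real.sin a := Real.sin_nonneg_of_nonneg_of_le_pi ha0 haπ
  have hsb : 0 ≤ Real.sin b := Real.sin_nonneg_of_nonneg_of_le_pi hb0 hbπ
  have hsc : 0 ≤ Real.sin c := Real.sin_nonneg_of_nonneg_of_le_pi hc0 hcπ
  have hcA : Real.cos A ≤ 0 :=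
    Real.cos_nonpos_of_pi_div_two_le_of_le hA.1 (by linarith [hA.2, Real.pi_pos])
  have hcB : Real.cos B ≤ 0 :=
    Real.cos_nonpos_of_pi_div_two_le_of_le hB.1 (by linarith [hB.2, Real.pi_pos])
  have h1 : Real.cos c ≤ Real.cos a * Real.cos b := by
    nlinarith [mul_nonneg hsa hsb]
  have h2 : Real.cos a ≤ Real.cos c * Real.cos b := by
    nlinarith [mul_nonneg hsc hsb]
  -- cos a + cos c > 0 since a + c < π
  have hac : a + c < π := by linarith
  have hpos : 0 < Real.cos a + Real.cos c := by
    have : Real.cos (π - c) < Real.cos a :=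
      Real.cos_lt_cos_of_nonneg_of_le_pi ha0 (by linarith) (by linarith)
    rw [Real.cos_pi_sub] at this
    linarith
  have hcosb1 : 1 ≤ Real.cos b := by
    have h3 : Real.cos a + Real.cos c ≤ Real.cos b * (Real.cos a + Real.cos c) := by
      nlinarith
    nlinarith
  have hbzero : b = 0 := by
    have hcb : Real.cos b = 1 := le_antisymm (Real.cos_le_one b) hcosb1
    have := (Real.cos_eq_one_iff_of_lt_of_lt (x := b)
      (by nlinarith [Real.pi_pos]) (by nlinarith [Real.pi_pos])).1 hcb
    linarith
  have hinner : (1 : ℝ) ≤ (inner ℝ q s : ℝ) := Real.arccos_eq_zero.1 hbzero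
  have hle : (inner ℝ q s : ℝ) ≤ 1 := by
    calc (inner ℝ q s : ℝ) ≤ ‖q‖ * ‖s‖ := real_inner_le_norm q s
    _ = 1 := by rw [hq, hs, one_mul]
  exact (inner_eq_one_iff_of_norm_eq_one hq hs).1 (le_antisymm hle hinner)
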